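/- Suppose M and N are relatively prime. Let F be a unit-norm sequence in C^M with N vectors satisfying ‖FF* − (N/M)I‖_HS² ≤ 2/M³. Then F is not (1/(M⁸N⁴))-orthogonally partitionable, i.e., for every nontrivial partition I ⊔ J of {1,...,N} there exist i ∈ I, j ∈ J with |⟨f_i, f_j⟩| ≥ 1/(M⁸N⁴). -/

import Mathlib

noncomputable section
open scoped InnerProductSpace
open Finset

def col {M N : ℕ} (F : Matrix (Fin M) (Fin N) ℂ) (n : Fin N) : EuclideanSpace ℂ (Fin M) :=
  (WithLp.equiv 2 (Fin M → ℂ)).symm (fun m => F m n)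

def hsq {M N : ℕ} (A : Matrix (Fin M) (Fin N) ℂ) : ℝ := ∑ i, ∑ j, ‖A i j‖ ^ 2

open scoped ComplexConjugate

namespace NotEps

variable {M N : ℕ}

def ip {M : ℕ} (x y : Fin M → ℂ) : ℂ := ∑ m, conj (x m) * y m

def uu (F : Matrix (Fin M) (Fin N) ℂ) (x : Fin M → ℂ) (n : Fin N) : ℂ :=
  ∑ m, conj (F m n) * x m

def Amat (F : Matrix (Fin M) (Fin N) ℂ) (I : Finset (Fin N)) : Matrix (Fin M) (Fin M) ℂ :=
  Matrix.of fun m m' => ∑ i ∈ I, F m i * conj (F m' i)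

def gram (F : Matrix (Fin M) (Fin N) ℂ) (i j : Fin N) : ℂ := ∑ m, conj (F m i) * F m j

lemma norm_sq_conj_mul (z : ℂ) : conj z * z = ((‖z‖^2 : ℝ) : ℂ) := by
  rw [mul_comm, Complex.mul_conj']
  push_cast
  ring

lemma cs_ip (x y : Fin M → ℂ) : ‖ip x y‖^2 ≤ (∑ m, ‖x m‖^2) * (∑ m, ‖y m‖^2) := by
  have h1 : ‖ip x y‖ ≤ ∑ m, ‖x m‖ * ‖y m‖ := by
    refine (norm_sum_le _ _).trans ?_
    refine Finset.sum_le_sum fun m _ => ?_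
    rw [norm_mul, RCLike.norm_conj]
  calc ‖ip x y‖^2 ≤ (∑ m, ‖x m‖ * ‖y m‖)^2 := by
        apply pow_le_pow_left₀ (norm_nonneg _) h1
    _ ≤ _ := Finset.sum_mul_sq_le_sq_mul_sq _ _ _

lemma mulVec_sq (T : Matrix (Fin M) (Fin M) ℂ) (x : Fin M → ℂ) :
    ∑ m, ‖(T.mulVec x) m‖^2 ≤ hsq T * ∑ m, ‖x m‖^2 := by
  rw [hsq, Finset.sum_mul]
  refine Finset.sum_le_sum fun m _ => ?_
  have := cs_ip (fun j => conj (T m j)) x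
  simp only [ip] at this
  simpa [Matrix.mulVec, dotProduct, RCLike.norm_conj] using this

lemma Amat_herm (F : Matrix (Fin M) (Fin N) ℂ) (I : Finset (Fin N)) : (Amat F I).IsHermitian := by
  ext m m'
  simp only [Matrix.conjTranspose_apply, Amat, Matrix.of_apply, star_sum, star_mul',
    RCLike.star_def, Complex.conj_conj]
  exact Finset.sum_congr rfl fun i _ => by ring

lemma Amat_mulVec (F : Matrix (Fin M) (Fin N) ℂ) (I : Finset (Fin N)) (x : Fin M → ℂ) (m : Fin M) :
    (Amat F I).mulVec x m = ∑ i ∈ I, F m i * uu F x i := by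
  simp only [Matrix.mulVec, dotProduct, Amat, Matrix.of_apply, uu, Finset.sum_mul,
    Finset.mul_sum]
  rw [Finset.sum_comm]
  exact Finset.sum_congr rfl fun i _ => Finset.sum_congr rfl fun m' _ => by ring

lemma ip_Amat (F : Matrix (Fin M) (Fin N) ℂ) (I : Finset (Fin N)) (x : Fin M → ℂ) :
    ip x ((Amat F I).mulVec x) = ∑ i ∈ I, ((‖uu F x i‖^2 : ℝ) : ℂ) := by
  simp only [ip, Amat_mulVec, Finset.mul_sum]
  rw [Finset.sum_comm]
  refine Finset.sum_congr rfl fun i _ => ?_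
  have : ∑ m, conj (x m) * (F m i * uu F x i) = conj (uu F x i) * uu F x i := by
    rw [uu, map_sum, Finset.sum_mul]
    refine Finset.sum_congr rfl fun m _ => ?_
    simp only [map_mul, Complex.conj_conj]
    ring
  rw [this, mul_comm, Complex.mul_conj']
  push_cast; ring

lemma inner_eq_ip (x y : EuclideanSpace ℂ (Fin M)) : ⟪x, y⟫_ℂ = ip (⇑x) (⇑y) := by
  simp [ip, PiLp.inner_apply, RCLike.inner_apply, mul_comm]

lemma uu_eq_inner (F : Matrix (Fin M) (Fin N) ℂ) (x : EuclideanSpace ℂ (Fin M)) (n : Fin N) :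
    uu F (⇑x) n = ⟪col F n, x⟫_ℂ := by
  simp [uu, col, PiLp.inner_apply, RCLike.inner_apply, mul_comm]

-- Parseval

lemma parseval (F : Matrix (Fin M) (Fin N) ℂ) (hn : ∀ n, ‖col F n‖ = 1)
    (b : OrthonormalBasis (Fin M) ℂ (EuclideanSpace ℂ (Fin M))) (n : Fin N) :
    ∑ i, ‖uu F (⇑(b i)) n‖^2 = 1 := by
  have h := b.sum_inner_mul_inner (col F n) (col F n)
  have h2 : ∀ i : Fin M, ⟪col F n, b i⟫_ℂ * ⟪b i, col F n⟫_ℂ = ((‖uu F (⇑(b i)) n‖^2 : ℝ) : ℂ) := by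
    intro i
    rw [← inner_conj_symm (b i), uu_eq_inner, Complex.mul_conj']
    push_cast; ring
  rw [Finset.sum_congr rfl fun i _ => h2 i] at h
  have h3 : ⟪col F n, col F n⟫_ℂ = ((1:ℝ):ℂ) := by
    rw [inner_self_eq_norm_sq_to_K, hn n]; norm_num
  rw [h3] at h
  exact_mod_cast h

lemma ip_self (x : EuclideanSpace ℂ (Fin M)) (hx : ‖x‖ = 1) : ip (⇑x) (⇑x) = 1 := by
  rw [← inner_eq_ip, inner_self_eq_norm_sq_to_K, hx]; norm_num

lemma sum_normsq_eq_one (x : EuclideanSpace ℂ (Fin M)) (hx : ‖x‖ = 1) :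
    ∑ m, ‖x m‖^2 = 1 := by
  have h := hx
  rw [EuclideanSpace.norm_eq, Real.sqrt_eq_one] at h
  simpa using h

lemma eig_qf (F : Matrix (Fin M) (Fin N) ℂ) (I : Finset (Fin N)) (x : EuclideanSpace ℂ (Fin M))
    (hx : ‖x‖ = 1) (t : ℝ) (heig : (Amat F I).mulVec ⇑x = t • ⇑x) :
    ∑ i ∈ I, ‖uu F (⇑x) i‖^2 = t := by
  have h1 := ip_Amat F I ⇑x
  rw [heig] at h1
  have h2 : ip (⇑x) (t • ⇑x) = ((t:ℝ):ℂ) * ip (⇑x) (⇑x) := by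
    simp only [ip, Pi.smul_apply, Complex.real_smul, Finset.mul_sum]
    exact Finset.sum_congr rfl fun m _ => by ring
  rw [h2, ip_self x hx, mul_one] at h1
  exact_mod_cast h1.symm

-- quadratic form of T on a unit vector

lemma T_qf (F : Matrix (Fin M) (Fin N) ℂ) (x : EuclideanSpace ℂ (Fin M)) (hx : ‖x‖ = 1) :
    ip (⇑x) ((F * F.conjTranspose - ((N : ℂ) / M) • (1 : Matrix (Fin M) (Fin M) ℂ)).mulVec ⇑x)
      = ((∑ n, ‖uu F (⇑x) n‖^2 : ℝ) : ℂ) - (N : ℂ) / M := by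
  have hS : F * F.conjTranspose = Amat F Finset.univ := by
    ext m m'; simp [Matrix.mul_apply, Amat]
  rw [Matrix.sub_mulVec, hS]
  have h1 : ip (⇑x) ((Amat F Finset.univ).mulVec ⇑x - (((N : ℂ) / M) • (1 : Matrix (Fin M) (Fin M) ℂ)).mulVec ⇑x)
      = ip (⇑x) ((Amat F Finset.univ).mulVec ⇑x) - ip (⇑x) ((((N : ℂ) / M) • (1 : Matrix (Fin M) (Fin M) ℂ)).mulVec ⇑x) := by
    simp only [ip, Pi.sub_apply, mul_sub, Finset.sum_sub_distrib]
  rw [h1, ip_Amat]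
  have h2 : (((N : ℂ) / M) • (1 : Matrix (Fin M) (Fin M) ℂ)).mulVec ⇑x = ((N : ℂ) / M) • ⇑x := by
    rw [Matrix.smul_mulVec, Matrix.one_mulVec]
  rw [h2]
  have h3 : ip (⇑x) (((N : ℂ) / M) • ⇑x) = ((N : ℂ) / M) * ip (⇑x) (⇑x) := by
    simp only [ip, Pi.smul_apply, smul_eq_mul, Finset.mul_sum]
    exact Finset.sum_congr rfl fun m _ => by ring
  rw [h3, ip_self x hx, mul_one]
  push_cast
  ring

lemma T_bound (F : Matrix (Fin M) (Fin N) ℂ) (x : EuclideanSpace ℂ (Fin M)) (hx : ‖x‖ = 1)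
    (T : Matrix (Fin M) (Fin M) ℂ) :
    ‖ip (⇑x) (T.mulVec ⇑x)‖^2 ≤ hsq T := by
  calc ‖ip (⇑x) (T.mulVec ⇑x)‖^2 ≤ (∑ m, ‖x m‖^2) * (∑ m, ‖(T.mulVec ⇑x) m‖^2) := cs_ip _ _
    _ ≤ (∑ m, ‖x m‖^2) * (hsq T * ∑ m, ‖x m‖^2) := by
        refine mul_le_mul_of_nonneg_left (mulVec_sq T ⇑x) ?_
        exact Finset.sum_nonneg fun m _ => sq_nonneg _
    _ = hsq T := by rw [sum_normsq_eq_one x hx]; ring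

lemma sigma_dev (F : Matrix (Fin M) (Fin N) ℂ) (x : EuclideanSpace ℂ (Fin M)) (hx : ‖x‖ = 1) :
    ((∑ n, ‖uu F (⇑x) n‖^2) - (N : ℝ) / M)^2
      ≤ hsq (F * F.conjTranspose - ((N : ℂ) / M) • (1 : Matrix (Fin M) (Fin M) ℂ)) := by
  have h1 := T_bound F x hx (F * F.conjTranspose - ((N : ℂ) / M) • (1 : Matrix (Fin M) (Fin M) ℂ))
  rw [T_qf F x hx] at h1
  have h2 : (((∑ n, ‖uu F (⇑x) n‖^2 : ℝ) : ℂ) - (N : ℂ) / M)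
      = ((((∑ n, ‖uu F (⇑x) n‖^2) - (N : ℝ) / M : ℝ)) : ℂ) := by push_cast; ring
  rw [h2] at h1
  rwa [Complex.norm_real, Real.norm_eq_abs, sq_abs] at h1

lemma key_identity (F : Matrix (Fin M) (Fin N) ℂ) (I J : Finset (Fin N))
    (x : Fin M → ℂ) (t : ℝ) (heig : (Amat F I).mulVec x = t • x) :
    ∑ i ∈ I, ∑ j ∈ J, conj (uu F x i) * gram F i j * uu F x j
      = (t : ℂ) * ((∑ j ∈ J, ‖uu F x j‖^2 : ℝ) : ℂ) := by
  have inner_eq : ∀ j, ∑ i ∈ I, conj (uu F x i) * gram F i j = (t:ℂ) * conj (uu F x j) := by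
    intro j
    have swap : ∑ i ∈ I, conj (uu F x i) * gram F i j
        = ∑ m, conj ((Amat F I).mulVec x m) * F m j := by
      simp only [gram, Finset.mul_sum, Amat_mulVec, map_sum, Finset.sum_mul]
      rw [Finset.sum_comm]
      refine Finset.sum_congr rfl fun m _ => Finset.sum_congr rfl fun i _ => ?_
      simp only [map_mul]
      ring
    rw [swap, heig]
    simp only [Pi.smul_apply, Complex.real_smul, map_mul, Complex.conj_ofReal, uu, map_sum,
      map_mul, Complex.conj_conj, Finset.mul_sum]
    refine Finset.sum_congr rfl fun m _ => by ring
  calc ∑ i ∈ I, ∑ j ∈ J, conj (uu F x i) * gram F i j * uu F x j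
      = ∑ j ∈ J, (∑ i ∈ I, conj (uu F x i) * gram F i j) * uu F x j := by
        rw [Finset.sum_comm]
        exact Finset.sum_congr rfl fun j _ => by rw [Finset.sum_mul]
    _ = (t:ℂ) * ∑ j ∈ J, conj (uu F x j) * uu F x j := by
        rw [Finset.mul_sum]
        exact Finset.sum_congr rfl fun j _ => by rw [inner_eq j]; ring
    _ = (t : ℂ) * ((∑ j ∈ J, ‖uu F x j‖^2 : ℝ) : ℂ) := by
        congr 1
        rw [Complex.ofReal_sum]
        exact Finset.sum_congr rfl fun j _ => by
          rw [mul_comm, Complex.mul_conj']; push_cast; ring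

lemma mu_beta (F : Matrix (Fin M) (Fin N) ℂ) (I J : Finset (Fin N))
    (x : EuclideanSpace ℂ (Fin M)) (hx : ‖x‖ = 1) (t : ℝ)
    (heig : (Amat F I).mulVec ⇑x = t • ⇑x) (ε : ℝ)
    (hcross : ∀ i ∈ I, ∀ j ∈ J, ‖gram F i j‖ ≤ ε) :
    t * (∑ j ∈ J, ‖uu F (⇑x) j‖^2) ≤ (I.card : ℝ) * (J.card : ℝ) * ε^2 := by
  set u := uu F (⇑x) with hu
  set β := ∑ j ∈ J, ‖u j‖^2 with hβ
  have hβ0 : 0 ≤ β := Finset.sum_nonneg fun j _ => sq_nonneg _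
  have ht : ∑ i ∈ I, ‖u i‖^2 = t := eig_qf F I x hx t heig
  rcases le_or_gt (t * β) 0 with h | h
  · refine h.trans ?_
    positivity
  -- ε ≥ 0 since there is some nonzero cross term... careful: I or J could be empty, but then β or t = 0
  have hε : 0 ≤ ε := by
    by_contra hneg
    push_neg at hneg
    -- if I and J nonempty we get ‖gram‖ ≤ ε < 0 absurd; else t*β = 0
    rcases Finset.eq_empty_or_nonempty I with rIe | ⟨i0, hi0⟩
    · rw [rIe] at ht; simp at ht; rw [← ht] at h; simp at h
    rcases Finset.eq_empty_or_nonempty J with rJe | ⟨j0, hj0⟩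
    · rw [rJe] at hβ; simp at hβ; rw [hβ] at h; simp at h
    exact absurd ((norm_nonneg _).trans (hcross i0 hi0 j0 hj0)) (not_le.mpr hneg)
  have habs : t * β ≤ ε * ((∑ i ∈ I, ‖u i‖) * (∑ j ∈ J, ‖u j‖)) := by
    have h1 : ((t : ℂ) * ((β : ℝ) : ℂ)) = ((t * β : ℝ) : ℂ) := by push_cast; ring
    have h2 : t * β ≤ ‖∑ i ∈ I, ∑ j ∈ J, conj (u i) * gram F i j * u j‖ := by
      rw [key_identity F I J (⇑x) t heig, h1, Complex.norm_real]
      exact le_abs_self _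
    refine h2.trans ?_
    calc ‖∑ i ∈ I, ∑ j ∈ J, conj (u i) * gram F i j * u j‖
        ≤ ∑ i ∈ I, ∑ j ∈ J, ‖u i‖ * ε * ‖u j‖ := by
          refine (norm_sum_le _ _).trans (Finset.sum_le_sum fun i hi => ?_)
          refine (norm_sum_le _ _).trans (Finset.sum_le_sum fun j hj => ?_)
          rw [norm_mul, norm_mul, RCLike.norm_conj]
          gcongr
          exact hcross i hi j hj
      _ = ε * ((∑ i ∈ I, ‖u i‖) * (∑ j ∈ J, ‖u j‖)) := by
          rw [Finset.sum_mul_sum, Finset.mul_sum]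
          refine Finset.sum_congr rfl fun i _ => ?_
          rw [Finset.mul_sum]
          exact Finset.sum_congr rfl fun j _ => by ring
  -- Cauchy-Schwarz on each factor
  have csI : (∑ i ∈ I, ‖u i‖)^2 ≤ (I.card : ℝ) * t := by
    have := sq_sum_le_card_mul_sum_sq (s := I) (f := fun i => ‖u i‖)
    rwa [ht] at this
  have csJ : (∑ j ∈ J, ‖u j‖)^2 ≤ (J.card : ℝ) * β := by
    exact sq_sum_le_card_mul_sum_sq (s := J) (f := fun j => ‖u j‖)
  have hsum_nonneg : 0 ≤ (∑ i ∈ I, ‖u i‖) * (∑ j ∈ J, ‖u j‖) :=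
    mul_nonneg (Finset.sum_nonneg fun _ _ => norm_nonneg _)
      (Finset.sum_nonneg fun _ _ => norm_nonneg _)
  have hsq : (t * β)^2 ≤ ε^2 * ((I.card : ℝ) * t * ((J.card : ℝ) * β)) := by
    calc (t * β)^2 ≤ (ε * ((∑ i ∈ I, ‖u i‖) * (∑ j ∈ J, ‖u j‖)))^2 := by
          apply sq_le_sq' _ habs
          nlinarith
      _ = ε^2 * ((∑ i ∈ I, ‖u i‖)^2 * (∑ j ∈ J, ‖u j‖)^2) := by ring
      _ ≤ ε^2 * ((I.card : ℝ) * t * ((J.card : ℝ) * β)) := by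
          apply mul_le_mul_of_nonneg_left _ (sq_nonneg ε)
          have ht0 : 0 ≤ t := ht ▸ Finset.sum_nonneg fun i _ => sq_nonneg _
          apply mul_le_mul csI csJ (sq_nonneg _) ?_
          positivity
  -- divide by t*β > 0
  nlinarith [hsq, h]

lemma conj_ip (w z : Fin M → ℂ) : conj (ip w z) = ∑ m, w m * conj (z m) := by
  rw [ip, map_sum]
  exact Finset.sum_congr rfl fun m _ => by simp only [map_mul, Complex.conj_conj]

lemma outer_pair (w z : Fin M → ℂ) :
    ∑ p ∈ (Finset.univ ×ˢ Finset.univ : Finset (Fin M × Fin M)),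
      conj (w p.1 * conj (w p.2)) * (z p.1 * conj (z p.2))
    = ip w z * conj (ip w z) := by
  rw [Finset.sum_product]
  have h1 : ∀ m : Fin M, ∑ m' : Fin M, conj (w m * conj (w m')) * (z m * conj (z m'))
      = (conj (w m) * z m) * (∑ m', w m' * conj (z m')) := by
    intro m
    rw [Finset.mul_sum]
    refine Finset.sum_congr rfl fun m' _ => ?_
    simp only [map_mul, Complex.conj_conj]
    ring
  rw [Finset.sum_congr rfl fun m _ => h1 m, ← Finset.sum_mul, conj_ip]
  rfl

lemma frob_R_norm (hM : 0 < M) (K : Finset (Fin M)) (v : Fin M → Fin M → ℂ)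
    (hON : ∀ i i', ip (v i) (v i') = if i = i' then 1 else 0) :
    ∑ m, ∑ m', ‖(∑ i ∈ K, v i m * conj (v i m'))
        - (if m = m' then ((K.card : ℂ)/M) else 0)‖^2
      = (K.card : ℝ) - (K.card : ℝ)^2 / M := by
  set Q : Fin M → Fin M → ℂ := fun m m' => ∑ i ∈ K, v i m * conj (v i m') with hQ
  set D : Fin M → Fin M → ℂ := fun m m' => if m = m' then ((K.card : ℂ)/M) else 0 with hD
  have hMC : (M : ℂ) ≠ 0 := by exact_mod_cast Nat.cast_ne_zero.mpr hM.ne'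
  -- diagonal values of Q sum to card K
  have htrQ : ∑ m, Q m m = (K.card : ℂ) := by
    rw [hQ]
    simp only
    rw [Finset.sum_comm]
    have h1 : ∀ i ∈ K, ∑ m, v i m * conj (v i m) = 1 := by
      intro i _
      have h := hON i i
      simp only [if_pos] at h
      rw [← conj_ip, h, map_one]
    rw [Finset.sum_congr rfl h1]
    simp
  have hQQ : ∑ p ∈ (Finset.univ ×ˢ Finset.univ : Finset (Fin M × Fin M)),
      conj (Q p.1 p.2) * Q p.1 p.2 = (K.card : ℂ) := by
    have expand : ∀ p : Fin M × Fin M, conj (Q p.1 p.2) * Q p.1 p.2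
        = ∑ q ∈ K ×ˢ K, conj (v q.1 p.1 * conj (v q.1 p.2)) * (v q.2 p.1 * conj (v q.2 p.2)) := by
      intro p
      rw [hQ]
      simp only [map_sum, Finset.sum_mul_sum, Finset.sum_product]
    rw [Finset.sum_congr rfl fun p _ => expand p, Finset.sum_comm]
    have h3 : ∀ q ∈ (K ×ˢ K : Finset (Fin _ × Fin _)),
        (∑ p ∈ (Finset.univ ×ˢ Finset.univ : Finset (Fin M × Fin M)),
        conj (v q.1 p.1 * conj (v q.1 p.2)) * (v q.2 p.1 * conj (v q.2 p.2)))
        = if q.1 = q.2 then 1 else 0 := by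
      intro q _
      rw [outer_pair (v q.1) (v q.2), hON q.1 q.2]
      split <;> simp
    rw [Finset.sum_congr rfl h3, Finset.sum_product]
    have h4 : ∀ i ∈ K, (∑ i' ∈ K, if i = i' then (1:ℂ) else 0) = 1 := by
      intro i hi
      rw [Finset.sum_ite_eq]
      simp [hi]
    rw [Finset.sum_congr rfl h4]
    simp
  have hQD : ∑ p ∈ (Finset.univ ×ˢ Finset.univ : Finset (Fin M × Fin M)),
      conj (Q p.1 p.2) * D p.1 p.2 = (K.card : ℂ)^2 / M := by
    rw [Finset.sum_product]
    have h5 : ∀ m : Fin M, ∑ m' : Fin M, conj (Q m m') * D m m'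
        = conj (Q m m) * ((K.card : ℂ)/M) := by
      intro m
      rw [hD]
      simp only [mul_ite, mul_zero]
      rw [Finset.sum_ite_eq]
      simp
    rw [Finset.sum_congr rfl fun m _ => h5 m, ← Finset.sum_mul, ← map_sum, htrQ]
    have : conj ((K.card : ℂ)) = (K.card : ℂ) := by simp
    rw [this]
    ring
  have hDQ : ∑ p ∈ (Finset.univ ×ˢ Finset.univ : Finset (Fin M × Fin M)),
      conj (D p.1 p.2) * Q p.1 p.2 = (K.card : ℂ)^2 / M := by
    rw [Finset.sum_product]
    have h5 : ∀ m : Fin M, ∑ m' : Fin M, conj (D m m') * Q m m'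
        = ((K.card : ℂ)/M) * Q m m := by
      intro m
      rw [hD]
      simp only [apply_ite conj, map_zero, ite_mul, zero_mul]
      rw [Finset.sum_ite_eq]
      simp
    rw [Finset.sum_congr rfl fun m _ => h5 m, ← Finset.mul_sum, htrQ]
    ring
  have hDD : ∑ p ∈ (Finset.univ ×ˢ Finset.univ : Finset (Fin M × Fin M)),
      conj (D p.1 p.2) * D p.1 p.2 = (K.card : ℂ)^2 / M := by
    rw [Finset.sum_product]
    have h5 : ∀ m : Fin M, ∑ m' : Fin M, conj (D m m') * D m m'
        = ((K.card : ℂ)/M) * ((K.card : ℂ)/M) := by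
      intro m
      rw [hD]
      simp only [apply_ite conj, map_zero, ite_mul, zero_mul]
      rw [Finset.sum_ite_eq]
      simp
    rw [Finset.sum_congr rfl fun m _ => h5 m]
    rw [Finset.sum_const, Finset.card_univ, Fintype.card_fin]
    rw [nsmul_eq_mul]
    field_simp
  -- combine
  have hRR : ∑ p ∈ (Finset.univ ×ˢ Finset.univ : Finset (Fin M × Fin M)),
      conj (Q p.1 p.2 - D p.1 p.2) * (Q p.1 p.2 - D p.1 p.2)
      = (K.card : ℂ) - (K.card : ℂ)^2 / M := by
    have expand : ∀ p : Fin M × Fin M, conj (Q p.1 p.2 - D p.1 p.2) * (Q p.1 p.2 - D p.1 p.2)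
        = conj (Q p.1 p.2) * Q p.1 p.2 - conj (Q p.1 p.2) * D p.1 p.2
          - conj (D p.1 p.2) * Q p.1 p.2 + conj (D p.1 p.2) * D p.1 p.2 := by
      intro p
      rw [map_sub]
      ring
    rw [Finset.sum_congr rfl fun p _ => expand p]
    rw [Finset.sum_add_distrib, Finset.sum_sub_distrib, Finset.sum_sub_distrib,
      hQQ, hQD, hDQ, hDD]
    ring
  -- cast to the real statement
  have cast_eq : ((∑ m, ∑ m', ‖Q m m' - D m m'‖^2 : ℝ) : ℂ)
      = ∑ p ∈ (Finset.univ ×ˢ Finset.univ : Finset (Fin M × Fin M)),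
        conj (Q p.1 p.2 - D p.1 p.2) * (Q p.1 p.2 - D p.1 p.2) := by
    rw [Finset.sum_product]
    push_cast
    refine Finset.sum_congr rfl fun m _ => Finset.sum_congr rfl fun m' _ => ?_
    rw [mul_comm, Complex.mul_conj']
    try push_cast
    try ring
  have := cast_eq.trans hRR
  have final : ((∑ m, ∑ m', ‖Q m m' - D m m'‖^2 : ℝ) : ℂ)
      = (((K.card : ℝ) - (K.card : ℝ)^2 / M : ℝ) : ℂ) := by
    rw [this]; push_cast; ring
  exact Complex.ofReal_inj.mp final

lemma frob_cs (R T : Matrix (Fin M) (Fin M) ℂ) :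
    ‖∑ m, ∑ m', conj (R m m') * T m m'‖^2 ≤ (∑ m, ∑ m', ‖R m m'‖^2) * hsq T := by
  have h1 : ‖∑ m, ∑ m', conj (R m m') * T m m'‖ ≤ ∑ m, ∑ m', ‖R m m'‖ * ‖T m m'‖ := by
    refine (norm_sum_le _ _).trans (Finset.sum_le_sum fun m _ => ?_)
    refine (norm_sum_le _ _).trans (Finset.sum_le_sum fun m' _ => ?_)
    rw [norm_mul, RCLike.norm_conj]
  have h2 : (∑ m, ∑ m', ‖R m m'‖ * ‖T m m'‖)^2
      ≤ (∑ m, ∑ m', ‖R m m'‖^2) * (∑ m, ∑ m', ‖T m m'‖^2) := by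
    have := sum_mul_sq_le_sq_mul_sq (Finset.univ ×ˢ Finset.univ)
      (fun p : Fin M × Fin M => ‖R p.1 p.2‖) (fun p : Fin M × Fin M => ‖T p.1 p.2‖)
    simpa [← Finset.univ_product_univ, Finset.sum_product] using this
  calc ‖∑ m, ∑ m', conj (R m m') * T m m'‖^2
      ≤ (∑ m, ∑ m', ‖R m m'‖ * ‖T m m'‖)^2 := by
        apply pow_le_pow_left₀ (norm_nonneg _) h1
    _ ≤ _ := h2

lemma hsq_nonneg {M N : ℕ} (T : Matrix (Fin M) (Fin N) ℂ) : 0 ≤ hsq T :=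
  Finset.sum_nonneg fun _ _ => Finset.sum_nonneg fun _ _ => sq_nonneg _

lemma K_dev_bound (hM : 0 < M) (K : Finset (Fin M)) (v : Fin M → Fin M → ℂ)
    (hON : ∀ i i', ip (v i) (v i') = if i = i' then 1 else 0)
    (T : Matrix (Fin M) (Fin M) ℂ) (htr : ∑ m, T m m = 0) :
    ‖∑ i ∈ K, ip (v i) (T.mulVec (v i))‖^2 ≤ ((M:ℝ)/4) * hsq T := by
  set R : Matrix (Fin M) (Fin M) ℂ := Matrix.of fun m m' =>
    (∑ i ∈ K, v i m * conj (v i m')) - (if m = m' then ((K.card : ℂ)/M) else 0) with hR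
  have key : ∑ i ∈ K, ip (v i) (T.mulVec (v i)) = ∑ m, ∑ m', conj (R m m') * T m m' := by
    have expand : ∀ m m', conj (R m m') * T m m'
        = (∑ i ∈ K, conj (v i m) * v i m' * T m m')
          - (if m = m' then ((K.card : ℂ)/M) else 0) * T m m' := by
      intro m m'
      rw [hR]
      simp only [Matrix.of_apply]
      rw [map_sub, sub_mul]
      congr 1
      · rw [map_sum, Finset.sum_mul]
        exact Finset.sum_congr rfl fun i _ => by
          rw [map_mul, Complex.conj_conj]; try ring
      · congr 1
        split <;> simp
    rw [Finset.sum_congr rfl fun m _ => Finset.sum_congr rfl fun m' _ => expand m m']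
    have split : ∑ m, ∑ m', ((∑ i ∈ K, conj (v i m) * v i m' * T m m')
          - (if m = m' then ((K.card : ℂ)/M) else 0) * T m m')
        = (∑ m, ∑ m', ∑ i ∈ K, conj (v i m) * v i m' * T m m')
          - ∑ m, ∑ m', (if m = m' then ((K.card : ℂ)/M) else 0) * T m m' := by
      rw [← Finset.sum_sub_distrib]
      exact Finset.sum_congr rfl fun m _ => by rw [← Finset.sum_sub_distrib]
    rw [split]
    have hDpart : ∑ m, ∑ m', (if m = m' then ((K.card : ℂ)/M) else 0) * T m m' = 0 := by
      have h1 : ∀ m : Fin M, ∑ m', (if m = m' then ((K.card : ℂ)/M) else 0) * T m m'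
          = ((K.card : ℂ)/M) * T m m := by
        intro m
        simp only [ite_mul, zero_mul]
        rw [Finset.sum_ite_eq]
        simp
      rw [Finset.sum_congr rfl fun m _ => h1 m, ← Finset.mul_sum, htr, mul_zero]
    rw [hDpart, sub_zero]
    have hQpart : ∑ m, ∑ m', ∑ i ∈ K, conj (v i m) * v i m' * T m m'
        = ∑ i ∈ K, ip (v i) (T.mulVec (v i)) := by
      have s1 : ∀ m : Fin M, ∑ m', ∑ i ∈ K, conj (v i m) * v i m' * T m m'
          = ∑ i ∈ K, conj (v i m) * ((T.mulVec (v i)) m) := by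
        intro m
        rw [Finset.sum_comm]
        refine Finset.sum_congr rfl fun i _ => ?_
        rw [Matrix.mulVec, dotProduct, Finset.mul_sum]
        exact Finset.sum_congr rfl fun m' _ => by ring
      rw [Finset.sum_congr rfl fun m _ => s1 m, Finset.sum_comm]
      rfl
    rw [hQpart]
  rw [key]
  calc ‖∑ m, ∑ m', conj (R m m') * T m m'‖^2
      ≤ (∑ m, ∑ m', ‖R m m'‖^2) * hsq T := frob_cs R T
    _ = ((K.card : ℝ) - (K.card : ℝ)^2 / M) * hsq T := by
        rw [show (∑ m, ∑ m', ‖R m m'‖^2) = (K.card : ℝ) - (K.card : ℝ)^2 / M from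
          frob_R_norm hM K v hON]
    _ ≤ ((M:ℝ)/4) * hsq T := by
        apply mul_le_mul_of_nonneg_right _ (hsq_nonneg T)
        have hk0 : (0:ℝ) ≤ (K.card : ℝ) := Nat.cast_nonneg _
        have hMr : (0:ℝ) < M := by exact_mod_cast hM
        have h1 : ((K.card : ℝ))*M - (K.card : ℝ)^2 ≤ (M:ℝ)^2/4 := by
          nlinarith [sq_nonneg ((K.card : ℝ) - (M:ℝ)/2)]
        have h2 : (K.card : ℝ) - (K.card : ℝ)^2 / M
            = ((K.card : ℝ)*M - (K.card : ℝ)^2)/M := by field_simp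
        rw [h2]
        calc ((K.card : ℝ)*M - (K.card : ℝ)^2)/M ≤ ((M:ℝ)^2/4)/M := by
              gcongr
          _ = (M:ℝ)/4 := by field_simp

lemma small_case (hM : 0 < M) (hNM : N < M) (hN : 2 ≤ N) (F : Matrix (Fin M) (Fin N) ℂ)
    (hclose : hsq (F * F.conjTranspose - ((N : ℂ) / M) • (1 : Matrix (Fin M) (Fin M) ℂ))
      ≤ 2 / (M : ℝ) ^ 3) : False := by
  set T := F * F.conjTranspose - ((N : ℂ) / M) • (1 : Matrix (Fin M) (Fin M) ℂ) with hT
  -- find nonzero kernel vector of Fᴴ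
  have hni : ¬ Function.Injective (Matrix.mulVecLin F.conjTranspose) := by
    intro hinj
    have := LinearMap.finrank_le_finrank_of_injective hinj
    simp only [Module.finrank_pi, Fintype.card_fin] at this
    omega
  obtain ⟨x, y, hxy, hne⟩ : ∃ x y, Matrix.mulVecLin F.conjTranspose x
      = Matrix.mulVecLin F.conjTranspose y ∧ x ≠ y := by
    by_contra h
    push_neg at h
    exact hni fun x y hxy => h x y hxy
  set z : Fin M → ℂ := x - y with hz
  have hz0 : z ≠ 0 := sub_ne_zero_of_ne hne
  have hker : F.conjTranspose.mulVec z = 0 := by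
    have := sub_eq_zero_of_eq hxy
    rw [← map_sub] at this
    simpa [Matrix.mulVecLin_apply] using this
  have hSz : (F * F.conjTranspose).mulVec z = 0 := by
    rw [← Matrix.mulVec_mulVec, hker, Matrix.mulVec_zero]
  have hTz : T.mulVec z = -((N : ℂ)/M) • z := by
    rw [hT, Matrix.sub_mulVec, hSz, Matrix.smul_mulVec, Matrix.one_mulVec]
    simp
  set P := ∑ m, ‖z m‖^2 with hP
  have hP0 : 0 < P := by
    obtain ⟨m0, hm0⟩ := Function.ne_iff.mp hz0
    have hzne : z m0 ≠ 0 := by simpa using hm0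
    have : (0:ℝ) < ‖z m0‖^2 := by
      have := norm_pos_iff.mpr hzne
      positivity
    exact this.trans_le (Finset.single_le_sum (fun m _ => sq_nonneg ‖z m‖) (Finset.mem_univ m0))
  have hipz : ip z (T.mulVec z) = -((N : ℂ)/M) * ((P : ℝ) : ℂ) := by
    rw [hTz]
    have : ∀ m, conj (z m) * ((-((N : ℂ)/M)) • z) m = -((N : ℂ)/M) * (conj (z m) * z m) := by
      intro m; simp only [Pi.smul_apply, smul_eq_mul]; ring
    rw [ip, Finset.sum_congr rfl fun m _ => this m, ← Finset.mul_sum]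
    congr 1
    rw [hP, Complex.ofReal_sum]
    exact Finset.sum_congr rfl fun m _ => by rw [mul_comm, Complex.mul_conj']; norm_cast
  have hnorm : ‖ip z (T.mulVec z)‖ = ((N:ℝ)/M) * P := by
    rw [hipz, norm_mul, norm_neg]
    simp only [norm_div, Complex.norm_natCast, Complex.norm_real]
    rw [Real.norm_eq_abs, abs_of_nonneg hP0.le]
  have hub : ‖ip z (T.mulVec z)‖^2 ≤ hsq T * P^2 := by
    calc ‖ip z (T.mulVec z)‖^2 ≤ (∑ m, ‖z m‖^2) * (∑ m, ‖(T.mulVec z) m‖^2) := cs_ip _ _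
      _ ≤ P * (hsq T * P) := by
          apply mul_le_mul_of_nonneg_left (mulVec_sq T z) hP0.le
      _ = hsq T * P^2 := by ring
  rw [hnorm] at hub
  have hMr : (0:ℝ) < M := by exact_mod_cast hM
  have hNr : (2:ℝ) ≤ N := by exact_mod_cast hN
  have hMN : (N:ℝ) < M := by exact_mod_cast hNM
  have hc2 : ((N:ℝ)/M)^2 ≤ hsq T := by
    nlinarith [hub, mul_pos hP0 hP0]
  have : ((N:ℝ)/M)^2 ≤ 2/(M:ℝ)^3 := hc2.trans hclose
  -- N ≥ 2 ⇒ (N/M)² ≥ 4/M² > 2/M³ since M ≥ 3... M > N ≥ 2 so M ≥ 3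
  have hM3 : (3:ℝ) ≤ M := by
    have : 3 ≤ M := by omega
    exact_mod_cast this
  have h1 : (4:ℝ)/(M:ℝ)^2 ≤ ((N:ℝ)/M)^2 := by
    rw [div_pow]
    gcongr
    nlinarith
  have e2 : (4:ℝ)/(M:ℝ)^2 ≤ 2/(M:ℝ)^3 := h1.trans this
  rw [div_le_div_iff₀ (by positivity) (by positivity)] at e2
  nlinarith [mul_le_mul_of_nonneg_left hM3 (sq_nonneg (M:ℝ))]

lemma trace_T_zero (hM : 0 < M) (F : Matrix (Fin M) (Fin N) ℂ)
    (hunit' : ∀ n, ∑ m, ‖F m n‖^2 = 1) :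
    ∑ m, (F * F.conjTranspose - ((N : ℂ) / M) • (1 : Matrix (Fin M) (Fin M) ℂ)) m m = 0 := by
  have hMC : (M : ℂ) ≠ 0 := Nat.cast_ne_zero.mpr hM.ne'
  have h1 : ∀ m, (F * F.conjTranspose - ((N : ℂ) / M) • (1 : Matrix (Fin M) (Fin M) ℂ)) m m
      = (∑ n, F m n * conj (F m n)) - (N : ℂ)/M := by
    intro m
    simp [Matrix.mul_apply, Matrix.sub_apply, Matrix.smul_apply, Matrix.one_apply,
      Matrix.conjTranspose_apply]
  rw [Finset.sum_congr rfl fun m _ => h1 m, Finset.sum_sub_distrib]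
  have h2 : ∑ m : Fin M, ∑ n, F m n * conj (F m n) = (N : ℂ) := by
    rw [Finset.sum_comm]
    have h3 : ∀ n ∈ (univ : Finset (Fin N)), ∑ m, F m n * conj (F m n) = 1 := by
      intro n _
      revert n
      intro n
      have he : ∑ m, F m n * conj (F m n) = ((∑ m, ‖F m n‖^2 : ℝ) : ℂ) := by
        rw [Complex.ofReal_sum]
        exact Finset.sum_congr rfl fun m _ => by rw [Complex.mul_conj']; norm_cast
      rw [he, hunit' n]
      norm_num
    rw [Finset.sum_congr rfl h3]
    simp
  rw [h2, Finset.sum_const, Finset.card_univ, Fintype.card_fin]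
  rw [nsmul_eq_mul, mul_div_cancel₀ _ hMC, sub_self]

end NotEps

set_option maxHeartbeats 2000000 in
open NotEps in
theorem not_epsOP_of_coprime
    (M N : ℕ) (hM : 0 < M) (hcop : Nat.Coprime M N)
    (F : Matrix (Fin M) (Fin N) ℂ)
    (hunit : ∀ n : Fin N, ‖col F n‖ = 1)
    (hclose : hsq (F * F.conjTranspose - ((N : ℂ) / M) • (1 : Matrix (Fin M) (Fin M) ℂ))
      ≤ 2 / (M : ℝ) ^ 3) :
    ∀ I : Finset (Fin N), I ≠ ∅ → I ≠ univ →
      ∃ i ∈ I, ∃ j ∉ I, 1 / ((M : ℝ) ^ 8 * (N : ℝ) ^ 4) ≤ ‖⟪col F i, col F j⟫_ℂ‖ := by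
  classical
  intro I hIne hIuniv
  by_contra hcon
  push_neg at hcon
  obtain ⟨i0, hi0⟩ := Finset.nonempty_of_ne_empty hIne
  obtain ⟨j0, hj0⟩ : ∃ j, j ∉ I := by
    by_contra h
    push_neg at h
    exact hIuniv (Finset.eq_univ_iff_forall.mpr h)
  have hN2 : 2 ≤ N := by
    have hne : i0 ≠ j0 := fun h => hj0 (h ▸ hi0)
    have h1 : 1 < Fintype.card (Fin N) := Fintype.one_lt_card_iff.mpr ⟨i0, j0, hne⟩
    simp at h1; omega
  have hunit' : ∀ n, ∑ m, ‖F m n‖^2 = 1 := by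
    intro n
    have h := hunit n
    rw [EuclideanSpace.norm_eq, Real.sqrt_eq_one] at h
    simpa [col] using h
  have hgram_inner : ∀ i j, gram F i j = ⟪col F i, col F j⟫_ℂ := by
    intro i j
    simp [gram, col, PiLp.inner_apply, RCLike.inner_apply, mul_comm]
  set ε : ℝ := 1 / ((M : ℝ) ^ 8 * (N : ℝ) ^ 4) with hε
  have hgram : ∀ i ∈ I, ∀ j ∈ Iᶜ, ‖gram F i j‖ ≤ ε := by
    intro i hi j hj
    rw [hgram_inner]
    exact (hcon i hi j (Finset.mem_compl.mp hj)).le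
  -- case M = 1
  rcases Nat.lt_or_ge M 2 with hM1 | hM2
  · have hM1' : M = 1 := by omega
    subst hM1'
    have hval : ‖⟪col F i0, col F j0⟫_ℂ‖ = 1 := by
      rw [← hgram_inner]
      have : gram F i0 j0 = conj (F 0 i0) * F 0 j0 := by
        rw [gram, Fin.sum_univ_one]
      rw [this, norm_mul, RCLike.norm_conj]
      have hn : ∀ n, ‖F 0 n‖ = 1 := by
        intro n
        have := hunit' n
        rw [Fin.sum_univ_one] at this
        nlinarith [norm_nonneg (F 0 n)]
      rw [hn i0, hn j0]; norm_num
    have hlt := hcon i0 hi0 j0 hj0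
    rw [hval] at hlt
    have hεle : ε ≤ 1 := by
      rw [hε]
      rw [one_div]
      apply inv_le_one_of_one_le₀
      have h1 : (1:ℝ) ≤ (1:ℝ)^8 := by norm_num
      have h2 : (1:ℝ) ≤ (N:ℝ)^4 := by
        apply one_le_pow₀
        exact_mod_cast Nat.one_le_of_lt hN2
      calc (1:ℝ) = 1 * 1 := by norm_num
        _ ≤ (1:ℝ)^8 * (N:ℝ)^4 := by apply mul_le_mul h1 h2 (by norm_num) (by norm_num)
        _ = (1:ℝ)^8 * (N:ℝ)^4 := rfl
        _ = ((1:ℕ):ℝ)^8 * (N:ℝ)^4 := by norm_num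
    linarith
  -- now 2 ≤ M
  rcases lt_trichotomy M N with hMN | hMN | hMN
  · -- MAIN CASE
    have hA : (Amat F I).IsHermitian := Amat_herm F I
    set b := hA.eigenvectorBasis with hb
    set μ : Fin M → ℝ := hA.eigenvalues with hμ
    have heig : ∀ i, (Amat F I).mulVec (⇑(b i)) = μ i • (⇑(b i)) := fun i =>
      hA.mulVec_eigenvectorBasis i
    have hnormb : ∀ i, ‖b i‖ = 1 := fun i => b.orthonormal.1 i
    have hON : ∀ i i', ip (⇑(b i)) (⇑(b i')) = if i = i' then 1 else 0 := by
      intro i i'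
      rw [← inner_eq_ip]
      exact orthonormal_iff_ite.mp b.orthonormal i i'
    have hμdef : ∀ i, ∑ i' ∈ I, ‖uu F (⇑(b i)) i'‖^2 = μ i := fun i =>
      eig_qf F I (b i) (hnormb i) (μ i) (heig i)
    have hμ0 : ∀ i, 0 ≤ μ i := fun i =>
      (hμdef i) ▸ Finset.sum_nonneg fun _ _ => sq_nonneg _
    have hβ0 : ∀ i, 0 ≤ ∑ j ∈ Iᶜ, ‖uu F (⇑(b i)) j‖^2 := fun i =>
      Finset.sum_nonneg fun _ _ => sq_nonneg _
    have hσβ : ∀ i, ∑ n, ‖uu F (⇑(b i)) n‖^2 = μ i + ∑ j ∈ Iᶜ, ‖uu F (⇑(b i)) j‖^2 := by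
      intro i
      rw [← hμdef i]
      exact (Finset.sum_add_sum_compl I _).symm
    -- real number facts
    have hMr : (2:ℝ) ≤ (M:ℝ) := by exact_mod_cast hM2
    have hM0 : (0:ℝ) < M := by linarith
    have hNM1 : (M:ℝ) + 1 ≤ N := by exact_mod_cast hMN
    have hN0 : (0:ℝ) < N := by linarith
    have hc1 : (1:ℝ) ≤ (N:ℝ)/M := by
      rw [le_div_iff₀ hM0]
      linarith
    have hM3_8 : (8:ℝ) ≤ (M:ℝ)^3 := by
      have h := pow_le_pow_left₀ (by norm_num : (0:ℝ) ≤ 2) hMr 3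
      norm_num at h
      linarith
    have hσdev : ∀ i, ((∑ n, ‖uu F (⇑(b i)) n‖^2) - (N:ℝ)/M)^2 ≤ 2/(M:ℝ)^3 := fun i =>
      (sigma_dev F (b i) (hnormb i)).trans hclose
    have hσlb : ∀ i, (N:ℝ)/M - 1/2 ≤ ∑ n, ‖uu F (⇑(b i)) n‖^2 := by
      intro i
      have h1 := hσdev i
      have h2 : (2:ℝ)/(M:ℝ)^3 ≤ 1/4 := by
        rw [div_le_div_iff₀ (by positivity) (by norm_num)]
        linarith
      nlinarith [h1, h2]
    -- μ β bound
    have hε0 : (0:ℝ) < ε := by rw [hε]; positivity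
    have hμβ : ∀ i, μ i * (∑ j ∈ Iᶜ, ‖uu F (⇑(b i)) j‖^2) ≤ (N:ℝ)^2 * ε^2 := by
      intro i
      refine (mu_beta F I Iᶜ (b i) (hnormb i) (μ i) (heig i) ε hgram).trans ?_
      have hcard1 : (I.card : ℝ) ≤ N := by
        have h : I.card ≤ N := by simpa using Finset.card_le_univ I
        exact_mod_cast h
      have hcard2 : ((Iᶜ : Finset (Fin N)).card : ℝ) ≤ N := by
        have := Finset.card_le_univ (Iᶜ : Finset (Fin N))
        simp at this
        exact_mod_cast this
      have h3 : (I.card : ℝ) * (Iᶜ : Finset (Fin N)).card ≤ (N:ℝ)^2 := by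
        nlinarith [Nat.cast_nonneg (α := ℝ) I.card]
      nlinarith [sq_nonneg ε]
    -- the filter set K
    set K : Finset (Fin M) := univ.filter (fun i => (1:ℝ)/4 ≤ μ i) with hK
    set k : ℕ := K.card with hk
    have hkM : k ≤ M := by
      rw [hk]
      have := Finset.card_le_univ K
      simpa using this
    set δ : ℝ := 4 * ((N:ℝ)^2 * ε^2) with hδ
    have hδ0 : 0 ≤ δ := by rw [hδ]; positivity
    have hβK : ∀ i ∈ K, ∑ j ∈ Iᶜ, ‖uu F (⇑(b i)) j‖^2 ≤ δ := by
      intro i hiK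
      have h14 : (1:ℝ)/4 ≤ μ i := (Finset.mem_filter.mp hiK).2
      have := hμβ i
      have := hβ0 i
      rw [hδ]
      nlinarith
    have hμKc : ∀ i ∈ univ.filter (fun i => ¬ ((1:ℝ)/4 ≤ μ i)), μ i ≤ δ := by
      intro i hiK
      have h14 : ¬ ((1:ℝ)/4 ≤ μ i) := (Finset.mem_filter.mp hiK).2
      push_neg at h14
      have hβlb : (1:ℝ)/4 ≤ ∑ j ∈ Iᶜ, ‖uu F (⇑(b i)) j‖^2 := by
        have h1 := hσlb i
        have h2 := hσβ i
        linarith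
      have := hμβ i
      have := hμ0 i
      rw [hδ]
      nlinarith
    -- sum of eigenvalues
    have hμsum : ∑ i, μ i = (I.card : ℝ) := by
      calc ∑ i, μ i = ∑ i, ∑ i' ∈ I, ‖uu F (⇑(b i)) i'‖^2 :=
            Finset.sum_congr rfl fun i _ => (hμdef i).symm
        _ = ∑ i' ∈ I, ∑ i, ‖uu F (⇑(b i)) i'‖^2 := Finset.sum_comm
        _ = ∑ i' ∈ I, 1 := Finset.sum_congr rfl fun i' _ => parseval F hunit b i'
        _ = (I.card : ℝ) := by simp
    -- deviation sum bound
    have htr0 : ∑ m, (F * F.conjTranspose - ((N : ℂ) / M) • (1 : Matrix (Fin M) (Fin M) ℂ)) m m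
        = 0 := trace_T_zero hM F hunit'
    have hcast : ∑ i ∈ K, ip (⇑(b i))
        ((F * F.conjTranspose - ((N : ℂ) / M) • (1 : Matrix (Fin M) (Fin M) ℂ)).mulVec (⇑(b i)))
        = (((∑ i ∈ K, ((∑ n, ‖uu F (⇑(b i)) n‖^2) - (N:ℝ)/M) : ℝ)) : ℂ) := by
      rw [Complex.ofReal_sum]
      refine Finset.sum_congr rfl fun i _ => ?_
      rw [T_qf F (b i) (hnormb i)]
      push_cast
      ring
    have hE1sq : (∑ i ∈ K, ((∑ n, ‖uu F (⇑(b i)) n‖^2) - (N:ℝ)/M))^2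
        ≤ ((M:ℝ)/4) * (2/(M:ℝ)^3) := by
      have hKdev := K_dev_bound hM K (fun i => ⇑(b i)) hON
        (F * F.conjTranspose - ((N : ℂ) / M) • (1 : Matrix (Fin M) (Fin M) ℂ)) htr0
      rw [hcast] at hKdev
      rw [Complex.norm_real, Real.norm_eq_abs, sq_abs] at hKdev
      refine hKdev.trans ?_
      have : (0:ℝ) ≤ (M:ℝ)/4 := by positivity
      exact mul_le_mul_of_nonneg_left hclose this
    have hE1abs : |∑ i ∈ K, ((∑ n, ‖uu F (⇑(b i)) n‖^2) - (N:ℝ)/M)| ≤ 3/(4*(M:ℝ)) := by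
      have h9 : (∑ i ∈ K, ((∑ n, ‖uu F (⇑(b i)) n‖^2) - (N:ℝ)/M))^2 ≤ (3/(4*(M:ℝ)))^2 := by
        refine hE1sq.trans ?_
        rw [div_pow, div_mul_div_comm, div_le_div_iff₀ (by positivity) (by positivity)]
        ring_nf
        nlinarith [pow_pos hM0 5]
      have h10 := Real.sqrt_le_sqrt h9
      rw [Real.sqrt_sq_eq_abs, Real.sqrt_sq (by positivity)] at h10
      exact h10
    -- main identity
    have hid : (I.card : ℝ) - ((N:ℝ)/M) * k
        = (∑ i ∈ K, ((∑ n, ‖uu F (⇑(b i)) n‖^2) - (N:ℝ)/M))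
          - (∑ i ∈ K, ∑ j ∈ Iᶜ, ‖uu F (⇑(b i)) j‖^2)
          + (∑ i ∈ univ.filter (fun i => ¬ ((1:ℝ)/4 ≤ μ i)), μ i) := by
      have split : ∑ i ∈ K, μ i + ∑ i ∈ univ.filter (fun i => ¬ ((1:ℝ)/4 ≤ μ i)), μ i
          = ∑ i, μ i := by
        rw [hK]
        exact Finset.sum_filter_add_sum_filter_not univ _ μ
      have hKμ : ∑ i ∈ K, μ i
          = (∑ i ∈ K, ((∑ n, ‖uu F (⇑(b i)) n‖^2) - (N:ℝ)/M)) + ((N:ℝ)/M) * k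
            - ∑ i ∈ K, ∑ j ∈ Iᶜ, ‖uu F (⇑(b i)) j‖^2 := by
        have hterm : ∀ i ∈ K, μ i
            = (((∑ n, ‖uu F (⇑(b i)) n‖^2) - (N:ℝ)/M) + (N:ℝ)/M)
              - ∑ j ∈ Iᶜ, ‖uu F (⇑(b i)) j‖^2 := by
          intro i _
          have := hσβ i
          linarith
        rw [Finset.sum_congr rfl hterm, Finset.sum_sub_distrib, Finset.sum_add_distrib,
          Finset.sum_const, nsmul_eq_mul, hk]
        ring
      rw [hμsum] at split
      linarith
    -- error sums bounds
    have hsumβub : ∑ i ∈ K, ∑ j ∈ Iᶜ, ‖uu F (⇑(b i)) j‖^2 ≤ (M:ℝ) * δ := by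
      calc ∑ i ∈ K, ∑ j ∈ Iᶜ, ‖uu F (⇑(b i)) j‖^2 ≤ ∑ _i ∈ K, δ :=
            Finset.sum_le_sum hβK
        _ = (k:ℝ) * δ := by rw [Finset.sum_const, nsmul_eq_mul, hk]
        _ ≤ (M:ℝ) * δ := by
            apply mul_le_mul_of_nonneg_right _ hδ0
            exact_mod_cast hkM
    have hsumβlb : 0 ≤ ∑ i ∈ K, ∑ j ∈ Iᶜ, ‖uu F (⇑(b i)) j‖^2 :=
      Finset.sum_nonneg fun i _ => hβ0 i
    have hsumμub : ∑ i ∈ univ.filter (fun i => ¬ ((1:ℝ)/4 ≤ μ i)), μ i ≤ (M:ℝ) * δ := by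
      calc ∑ i ∈ univ.filter (fun i => ¬ ((1:ℝ)/4 ≤ μ i)), μ i
          ≤ ∑ _i ∈ univ.filter (fun i => ¬ ((1:ℝ)/4 ≤ μ i)), δ := Finset.sum_le_sum hμKc
        _ = ((univ.filter (fun i => ¬ ((1:ℝ)/4 ≤ μ i))).card : ℝ) * δ := by
            rw [Finset.sum_const, nsmul_eq_mul]
        _ ≤ (M:ℝ) * δ := by
            apply mul_le_mul_of_nonneg_right _ hδ0
            have := Finset.card_le_univ (univ.filter (fun i => ¬ ((1:ℝ)/4 ≤ μ i)))
            have h2 : ((univ.filter (fun i => ¬ ((1:ℝ)/4 ≤ μ i))).card) ≤ M := by simpa using this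
            exact_mod_cast h2
    have hsumμlb : 0 ≤ ∑ i ∈ univ.filter (fun i => ¬ ((1:ℝ)/4 ≤ μ i)), μ i :=
      Finset.sum_nonneg fun i _ => hμ0 i
    -- combine
    have hbound : |(I.card : ℝ) - ((N:ℝ)/M) * k| ≤ 3/(4*(M:ℝ)) + 2*((M:ℝ) * δ) := by
      rw [hid, abs_le]
      constructor
      · have := neg_abs_le (∑ i ∈ K, ((∑ n, ‖uu F (⇑(b i)) n‖^2) - (N:ℝ)/M))
        linarith [hE1abs]
      · have := le_abs_self (∑ i ∈ K, ((∑ n, ‖uu F (⇑(b i)) n‖^2) - (N:ℝ)/M))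
        linarith [hE1abs]
    -- integrality
    have hZ : (M * I.card : ℤ) ≠ (N * k : ℤ) := by
      intro hEq
      have hEq' : M * I.card = N * k := by exact_mod_cast hEq
      have hdvd : N ∣ I.card * M := by
        rw [Nat.mul_comm]
        exact ⟨k, hEq'⟩
      have hdvd2 : N ∣ I.card := (Nat.Coprime.dvd_of_dvd_mul_right (hcop.symm) hdvd)
      have hc1' : 1 ≤ I.card := Finset.card_pos.mpr ⟨i0, hi0⟩
      have hcN : I.card < N := by
        have hss : I ⊂ univ := (Finset.ssubset_univ_iff).mpr hIuniv
        have := Finset.card_lt_card hss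
        simpa using this
      exact absurd (Nat.le_of_dvd (by omega) hdvd2) (by omega)
    have habs1 : (1:ℝ) ≤ |(M:ℝ) * I.card - (N:ℝ) * k| := by
      have h1 : (1:ℤ) ≤ |(M * I.card : ℤ) - (N * k : ℤ)| :=
        Int.one_le_abs (sub_ne_zero_of_ne hZ)
      have h2 : ((|(M * I.card : ℤ) - (N * k : ℤ)| : ℤ) : ℝ)
          = |(M:ℝ) * I.card - (N:ℝ) * k| := by
        rw [Int.cast_abs]
        push_cast
        ring_nf
      calc (1:ℝ) = ((1:ℤ):ℝ) := by norm_num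
        _ ≤ ((|(M * I.card : ℤ) - (N * k : ℤ)| : ℤ) : ℝ) := by exact_mod_cast h1
        _ = _ := h2
    have hqM : (M:ℝ) * |(I.card : ℝ) - ((N:ℝ)/M) * k| = |(M:ℝ) * I.card - (N:ℝ) * k| := by
      have he : (M:ℝ) * ((I.card : ℝ) - ((N:ℝ)/M) * k) = (M:ℝ) * I.card - (N:ℝ) * k := by
        field_simp
      rw [← he, abs_mul, abs_of_pos hM0]
    -- final numeric contradiction
    have hnum : 2*((M:ℝ)^2 * δ) < 1/4 := by
      rw [hδ, hε]
      have hexp : 2*((M:ℝ)^2 * (4 * ((N:ℝ)^2 * (1 / ((M : ℝ) ^ 8 * (N : ℝ) ^ 4))^2)))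
          = 8 / ((M:ℝ)^14 * (N:ℝ)^6) := by
        field_simp
        ring
      rw [hexp]
      rw [div_lt_iff₀ (by positivity)]
      have h1 : (2:ℝ)^14 ≤ (M:ℝ)^14 := by
        apply pow_le_pow_left₀ (by norm_num) hMr
      have h2 : (1:ℝ) ≤ (N:ℝ)^6 := by
        apply one_le_pow₀
        linarith
      nlinarith
    have hfinal : (1:ℝ) ≤ 3/4 + 2*((M:ℝ)^2 * δ) := by
      have h1 : (1:ℝ) ≤ (M:ℝ) * (3/(4*(M:ℝ)) + 2*((M:ℝ) * δ)) := by
        rw [← hqM] at habs1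
        have h2 : (M:ℝ) * |(I.card : ℝ) - ((N:ℝ)/M) * k|
            ≤ (M:ℝ) * (3/(4*(M:ℝ)) + 2*((M:ℝ) * δ)) :=
          mul_le_mul_of_nonneg_left hbound hM0.le
        linarith
      have h3 : (M:ℝ) * (3/(4*(M:ℝ)) + 2*((M:ℝ) * δ)) = 3/4 + 2*((M:ℝ)^2*δ) := by
        field_simp
      linarith [h1, h3.symm.le]
    linarith

  · -- M = N impossible
    rw [hMN] at hcop
    rw [Nat.Coprime, Nat.gcd_self] at hcop
    omega
  · exact small_case hM hMN hN2 F hclose
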